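/- In the Birget–Rhodes expansion Γ(G), two elements (R,g) and (S,h) generate the same principal two-sided ideal if and only if (S,h) = (x⁻¹R, x⁻¹y) for some x,y ∈ R. -/

import Mathlib

/-- The Birget–Rhodes expansion of a group `G`: pairs `(R, g)` where `R` is a
finite subset of `G` containing `1` and `g`. -/
def BR (G : Type*) [Group G] [DecidableEq G] : Type _ :=
  {p : Finset G × G // (1 : G) ∈ p.1 ∧ p.2 ∈ p.1}

variable {G : Type*} [Group G] [DecidableEq G]

/-- Multiplication `(R,g)·(S,h) = (R ∪ gS, gh)`. -/
instance : Mul (BR G) :=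
  ⟨fun x y =>
    ⟨(x.1.1 ∪ y.1.1.image (x.1.2 * ·), x.1.2 * y.1.2),
      Finset.mem_union_left _ x.2.1,
      Finset.mem_union_right _ (Finset.mem_image_of_mem _ y.2.2)⟩⟩

/-- The principal two-sided ideal generated by `s`:
`⟨s⟩ = {s} ∪ sΓ(G) ∪ Γ(G)s ∪ Γ(G)sΓ(G)`. -/
def princ (s : BR G) : Set (BR G) :=
  {t | t = s ∨ (∃ a, t = s * a) ∨ (∃ a, t = a * s) ∨ ∃ a b, t = a * s * b}


/-- `⟨(R,g)⟩ = ⟨(S,h)⟩` iff `(S,h) = (x⁻¹R, x⁻¹y)` for some `x, y ∈ R`. -/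
lemma BR_mul_fst (x y : BR G) : (x * y).1.1 = x.1.1 ∪ y.1.1.image (x.1.2 * ·) := rfl
lemma BR_mul_snd (x y : BR G) : (x * y).1.2 = x.1.2 * y.1.2 := rfl

lemma mem_princ_iff (s t : BR G) :
    t ∈ princ s ↔ ∃ c : G, s.1.1.image (c * ·) ⊆ t.1.1 := by
  constructor
  · rintro (rfl | ⟨u, rfl⟩ | ⟨u, rfl⟩ | ⟨u, v, rfl⟩)
    · exact ⟨1, by simp⟩
    · refine ⟨1, ?_⟩
      rw [BR_mul_fst]
      simpa using (Finset.subset_union_left : t.1.1 ⊆ _)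
    · exact ⟨u.1.2, by rw [BR_mul_fst]; exact Finset.subset_union_right⟩
    · refine ⟨u.1.2, ?_⟩
      rw [BR_mul_fst, BR_mul_fst]
      exact Finset.subset_union_right.trans Finset.subset_union_left
  · rintro ⟨c, hc⟩
    have hcs : c * s.1.2 ∈ t.1.1 := hc (Finset.mem_image_of_mem _ s.2.2)
    have hc1 : c ∈ t.1.1 := by
      have := hc (Finset.mem_image_of_mem _ s.2.1); simp_all
    set z : G := (c * s.1.2)⁻¹ * t.1.2 with hz
    refine Or.inr (Or.inr (Or.inr ⟨⟨(t.1.1, c), t.2.1, hc1⟩,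
      ⟨(({1, z} : Finset G), z), by simp, by simp⟩, ?_⟩))
    refine Subtype.ext (Prod.ext ?_ ?_)
    · show t.1.1 = (t.1.1 ∪ s.1.1.image (c * ·)) ∪ ({1, z} : Finset G).image ((c * s.1.2) * ·)
      rw [Finset.union_eq_left.mpr hc]
      symm
      rw [Finset.union_eq_left]
      rw [Finset.image_insert, Finset.image_singleton, mul_one, hz, mul_inv_cancel_left]
      exact Finset.insert_subset hcs (Finset.singleton_subset_iff.mpr t.2.2)
    · show t.1.2 = (c * s.1.2) * z
      rw [hz, mul_inv_cancel_left]

theorem princ_eq_iff (a b : BR G) :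
    princ a = princ b ↔
      ∃ x ∈ a.1.1, ∃ y ∈ a.1.1,
        b.1.1 = a.1.1.image (x⁻¹ * ·) ∧ b.1.2 = x⁻¹ * y := by
  constructor
  · intro h
    have hb : b ∈ princ a := h ▸ (Or.inl rfl : b ∈ princ b)
    have ha : a ∈ princ b := h.symm ▸ (Or.inl rfl : a ∈ princ a)
    obtain ⟨c, hc⟩ := (mem_princ_iff a b).mp hb
    obtain ⟨d, hd⟩ := (mem_princ_iff b a).mp ha
    have hcardB : b.1.1.card ≤ a.1.1.card := by
      calc b.1.1.card = (b.1.1.image (d * ·)).card :=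
            (Finset.card_image_of_injective _ (mul_right_injective d)).symm
        _ ≤ a.1.1.card := Finset.card_le_card hd
    have cB : a.1.1.image (c * ·) = b.1.1 := by
      refine Finset.eq_of_subset_of_card_le hc ?_
      rw [Finset.card_image_of_injective _ (mul_right_injective c)]
      exact hcardB
    obtain ⟨w, hw, hw1⟩ := Finset.mem_image.mp (cB ▸ b.2.1 : (1:G) ∈ a.1.1.image (c * ·))
    obtain ⟨w', hw', hw2⟩ := Finset.mem_image.mp (cB ▸ b.2.2 : b.1.2 ∈ a.1.1.image (c * ·))
    have hcw : c⁻¹ = w := inv_eq_of_mul_eq_one_right hw1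
    refine ⟨c⁻¹, hcw ▸ hw, w', hw', ?_, ?_⟩
    · rw [inv_inv]; exact cB.symm
    · rw [inv_inv]; exact hw2.symm
  · rintro ⟨x, hx, y, hy, hB, hh⟩
    ext t
    rw [mem_princ_iff, mem_princ_iff]
    constructor
    · rintro ⟨c, hc⟩
      refine ⟨c * x, ?_⟩
      rw [hB, Finset.image_image]
      have : ((c * x) * ·) ∘ (x⁻¹ * ·) = (c * ·) := by
        funext w; show c * x * (x⁻¹ * w) = c * w; group
      rw [this]; exact hc
    · rintro ⟨c, hc⟩
      refine ⟨c * x⁻¹, ?_⟩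
      have : a.1.1.image ((c * x⁻¹) * ·) = b.1.1.image (c * ·) := by
        rw [hB, Finset.image_image]
        congr 1
        funext w; simp [Function.comp]; group
      rw [this]; exact hc
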